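/- Suppose P_l ⪰ 0 for l = 1,…,d, and (x̂, X̂) is an optimal solution of the enhanced semidefinite relaxation satisfying tr(P_0 X̂) ≥ x̂ᵀ P_0 x̂. Then x̂ is feasible for the original problem, the optimal values of the original problem and the relaxation coincide, and tr(P_0 X̂) = x̂ᵀ P_0 x̂. -/

import Mathlib

open Matrix ComplexOrder

/-- Feasibility for the original non-convex quadratic problem \eqref{P}. -/
def OrigFeas {n m d k : ℕ} (P : Fin d → Matrix (Fin n) (Fin n) ℝ)
    (q : Fin d → (Fin n → ℝ)) (r : Fin d → ℝ)
    (A : Matrix (Fin m) (Fin n) ℝ) (b : Fin m → ℝ)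
    (H0 : Matrix (Fin k) (Fin k) ℂ) (H : Fin n → Matrix (Fin k) (Fin k) ℂ)
    (x : Fin n → ℝ) : Prop :=
  (∀ l, x ⬝ᵥ (P l).mulVec x + 2 * (q l ⬝ᵥ x) + r l ≤ 0) ∧
  A.mulVec x = b ∧
  (H0 + ∑ j, x j • H j).PosSemidef

/-- Feasibility for the enhanced semidefinite relaxation \eqref{D3}. -/
def RelaxFeas {n m d k : ℕ} (P : Fin d → Matrix (Fin n) (Fin n) ℝ)
    (q : Fin d → (Fin n → ℝ)) (r : Fin d → ℝ)
    (A : Matrix (Fin m) (Fin n) ℝ) (b : Fin m → ℝ)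
    (H0 : Matrix (Fin k) (Fin k) ℂ) (H : Fin n → Matrix (Fin k) (Fin k) ℂ)
    (x : Fin n → ℝ) (X : Matrix (Fin n) (Fin n) ℝ) : Prop :=
  (∀ l, ((P l) * X).trace + 2 * (q l ⬝ᵥ x) + r l ≤ 0) ∧
  A.mulVec x = b ∧
  A * X = Matrix.vecMulVec b x ∧
  (X - Matrix.vecMulVec x x).PosSemidef ∧
  (H0 + ∑ j, x j • H j).PosSemidef


lemma psd_trace_nonneg {n : ℕ} {M : Matrix (Fin n) (Fin n) ℝ} (hM : M.PosSemidef) :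
    0 ≤ M.trace := by
  refine Finset.sum_nonneg fun i _ => ?_
  exact hM.diag_nonneg

lemma trace_mul_nonneg {n : ℕ} {M N : Matrix (Fin n) (Fin n) ℝ}
    (hM : M.PosSemidef) (hN : N.PosSemidef) : 0 ≤ (M * N).trace := by
  obtain ⟨C, hC, rfl⟩ : ∃ C : Matrix (Fin n) (Fin n) ℝ, C.PosSemidef ∧ C * C = N :=
    by
      open scoped MatrixOrder in
      exact ⟨CFC.sqrt N, (CFC.sqrt_nonneg N).posSemidef, CFC.sqrt_mul_sqrt_self N hN.nonneg⟩
  have h1 : (M * (C * C)).trace = (C * M * C).trace := by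
    rw [← Matrix.mul_assoc, Matrix.trace_mul_cycle]
  have h2 : Cᴴ * M * C = C * M * C := by rw [hC.1]
  rw [h1, ← h2]
  exact psd_trace_nonneg (hM.conjTranspose_mul_mul_same _)

lemma trace_mul_vecMulVec {n : ℕ} (M : Matrix (Fin n) (Fin n) ℝ) (x : Fin n → ℝ) :
    (M * Matrix.vecMulVec x x).trace = x ⬝ᵥ M.mulVec x := by
  simp only [Matrix.trace, Matrix.diag, Matrix.mul_apply, Matrix.vecMulVec_apply,
    dotProduct, Matrix.mulVec]
  congr 1; ext i
  rw [Finset.mul_sum]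
  congr 1; ext j
  ring

lemma mul_vecMulVec {n m : ℕ} (A : Matrix (Fin m) (Fin n) ℝ) (x y : Fin n → ℝ) :
    A * Matrix.vecMulVec x y = Matrix.vecMulVec (A.mulVec x) y := by
  ext i j
  simp only [Matrix.mul_apply, Matrix.vecMulVec_apply, Matrix.mulVec, dotProduct,
    Finset.sum_mul]
  congr 1; ext k; ring


/-- If all `P l ⪰ 0` and `(x̂, X̂)` is an optimal solution of the enhanced semidefinite
relaxation with `tr(P₀ X̂) ≥ x̂ᵀ P₀ x̂`, then `x̂` is feasible for the original problem,
the optimal values of both problems coincide, and `tr(P₀ X̂) = x̂ᵀ P₀ x̂`. -/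
theorem optimal_relaxation_solves_original {n m d k : ℕ}
    (P0 : Matrix (Fin n) (Fin n) ℝ) (P : Fin d → Matrix (Fin n) (Fin n) ℝ)
    (q0 : Fin n → ℝ) (q : Fin d → (Fin n → ℝ)) (r0 : ℝ) (r : Fin d → ℝ)
    (A : Matrix (Fin m) (Fin n) ℝ) (b : Fin m → ℝ)
    (H0 : Matrix (Fin k) (Fin k) ℂ) (H : Fin n → Matrix (Fin k) (Fin k) ℂ)
    (hP0 : P0.IsSymm) (hPsd : ∀ l, (P l).PosSemidef)
    (hH0 : H0.IsHermitian) (hH : ∀ j, (H j).IsHermitian)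
    (xh : Fin n → ℝ) (Xh : Matrix (Fin n) (Fin n) ℝ)
    (hfeas : RelaxFeas P q r A b H0 H xh Xh)
    (hopt : ∀ x X, RelaxFeas P q r A b H0 H x X →
      (P0 * Xh).trace + 2 * (q0 ⬝ᵥ xh) + r0 ≤ (P0 * X).trace + 2 * (q0 ⬝ᵥ x) + r0)
    (hgap : xh ⬝ᵥ P0.mulVec xh ≤ (P0 * Xh).trace) :
    OrigFeas P q r A b H0 H xh ∧
    sInf ((fun y : Fin n → ℝ =>
        ((y ⬝ᵥ P0.mulVec y + 2 * (q0 ⬝ᵥ y) + r0 : ℝ) : EReal)) ''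
        {y | OrigFeas P q r A b H0 H y}) =
    sInf ((fun p : (Fin n → ℝ) × Matrix (Fin n) (Fin n) ℝ =>
        (((P0 * p.2).trace + 2 * (q0 ⬝ᵥ p.1) + r0 : ℝ) : EReal)) ''
        {p | RelaxFeas P q r A b H0 H p.1 p.2}) ∧
    (P0 * Xh).trace = xh ⬝ᵥ P0.mulVec xh := by
  obtain ⟨hineq, heq, hAX, hpsd, hLMI⟩ := hfeas
  have key : ∀ l, xh ⬝ᵥ (P l).mulVec xh ≤ ((P l) * Xh).trace := by
    intro l
    have h := trace_mul_nonneg (hPsd l) hpsd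
    have hsub : ((P l) * (Xh - Matrix.vecMulVec xh xh)).trace
        = ((P l) * Xh).trace - ((P l) * Matrix.vecMulVec xh xh).trace := by
      rw [Matrix.mul_sub, Matrix.trace_sub]
    rw [hsub, trace_mul_vecMulVec] at h
    linarith
  have horig : OrigFeas P q r A b H0 H xh :=
    ⟨fun l => by linarith [key l, hineq l], heq, hLMI⟩
  have hrel : ∀ y, OrigFeas P q r A b H0 H y →
      RelaxFeas P q r A b H0 H y (Matrix.vecMulVec y y) := by
    rintro y ⟨h1, h2, h3⟩
    exact ⟨fun l => by rw [trace_mul_vecMulVec]; exact h1 l, h2,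
      by rw [mul_vecMulVec, h2],
      by simpa [sub_self] using (Matrix.PosSemidef.zero :
        (0 : Matrix (Fin n) (Fin n) ℝ).PosSemidef), h3⟩
  have hXx : RelaxFeas P q r A b H0 H xh (Matrix.vecMulVec xh xh) := hrel xh horig
  have hle := hopt xh _ hXx
  rw [trace_mul_vecMulVec] at hle
  have htr : (P0 * Xh).trace = xh ⬝ᵥ P0.mulVec xh := le_antisymm (by linarith) hgap
  refine ⟨horig, le_antisymm ?_ ?_, htr⟩
  · refine le_trans (sInf_le ⟨xh, horig, rfl⟩) (le_sInf ?_)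
    rintro a ⟨⟨y, Y⟩, hyY, rfl⟩
    have h := hopt y Y hyY
    rw [htr] at h
    show ((xh ⬝ᵥ P0.mulVec xh + 2 * (q0 ⬝ᵥ xh) + r0 : ℝ) : EReal) ≤
      (((P0 * Y).trace + 2 * (q0 ⬝ᵥ y) + r0 : ℝ) : EReal)
    exact_mod_cast h
  · refine le_sInf ?_
    rintro a ⟨y, hy, rfl⟩
    exact sInf_le ⟨(y, Matrix.vecMulVec y y), hrel y hy, by simp only [trace_mul_vecMulVec]⟩
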